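/- Langer transformation identity: let η(z) be as in the Langer transformation with inverse z(η), ż = dz/dη, and suppose φ and Φ are related by φ''(z) = ż(η(z))^{1/2} Φ(η(z)). If Φ satisfies ε Φ''(η) − U'_c η Φ(η) = f(η), then φ satisfies ε φ'''' − (U − c) φ'' = ż^{−3/2} f(η(z)) + ε (d²/dz²)(ż^{1/2}) · ż^{−1/2} · φ''(z). -/

import Mathlib

/-- Langer conjugation formula between the primitive Airy operator
`ε∂_z⁴ - (U-c)∂_z²` and the classical Airy operator `ε∂_η² - U'_c η`.
Here `sq z` stands for `ż(η(z))^{1/2}`, i.e. `(sq z)² = (η'(z))⁻¹`. -/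
theorem langer_conjugation
    (U : ℝ → ℂ) (c Uc' ε : ℂ) (η sq : ℝ → ℂ) (Φ f : ℂ → ℂ) (φ : ℝ → ℂ)
    (hφ : ContDiff ℝ 4 φ) (hη : ContDiff ℝ 2 η) (hsq : ContDiff ℝ 2 sq)
    (hsq0 : ∀ z : ℝ, sq z ≠ 0)
    (hΦ : ∀ w : ℂ, DifferentiableAt ℂ Φ w ∧ DifferentiableAt ℂ (deriv Φ) w)
    (hsq2 : ∀ z : ℝ, (sq z) ^ 2 = (deriv η z)⁻¹)
    (hLanger : ∀ z : ℝ, (U z - c) * ((deriv η z)⁻¹) ^ 2 = Uc' * η z)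
    (hrel : ∀ z : ℝ, deriv (deriv φ) z = sq z * Φ (η z))
    (hAiry : ∀ w : ℂ, ε * deriv (deriv Φ) w - Uc' * w * Φ w = f w) :
    ∀ z : ℝ,
      ε * iteratedDeriv 4 φ z - (U z - c) * deriv (deriv φ) z
        = ((sq z)⁻¹) ^ 3 * f (η z)
          + ε * (deriv (deriv sq) z) * (sq z)⁻¹ * deriv (deriv φ) z := by
  -- basic differentiability
  have hsqd : Differentiable ℝ sq := hsq.differentiable (by norm_num)
  have hsq1 : ContDiff ℝ 1 (deriv sq) := by
    have h2 : ContDiff ℝ ((1:ℕ∞)+1) sq := by exact_mod_cast hsq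
    exact (contDiff_succ_iff_deriv.mp h2).2.2
  have hsqd' : Differentiable ℝ (deriv sq) := hsq1.differentiable (by norm_num)
  have hηd : Differentiable ℝ η := hη.differentiable (by norm_num)
  have hη1 : ContDiff ℝ 1 (deriv η) := by
    have h2 : ContDiff ℝ ((1:ℕ∞)+1) η := by exact_mod_cast hη
    exact (contDiff_succ_iff_deriv.mp h2).2.2
  have hηd' : Differentiable ℝ (deriv η) := hη1.differentiable (by norm_num)
  -- η' never vanishes, and η' = (sq²)⁻¹
  have hη'ne : ∀ z : ℝ, deriv η z ≠ 0 := by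
    intro z h
    apply hsq0 z
    have := hsq2 z
    rw [h, inv_zero] at this
    exact pow_eq_zero_iff (n := 2) (by norm_num) |>.mp this
  have hη' : ∀ z : ℝ, deriv η z = (sq z ^ 2)⁻¹ := by
    intro z; rw [hsq2 z, inv_inv]
  -- φ'' = sq · Φ∘η as functions
  have hψ : deriv (deriv φ) = fun z => sq z * Φ (η z) := funext hrel
  have hd1 : ∀ z : ℝ, HasDerivAt (fun z => sq z * Φ (η z))
      (deriv sq z * Φ (η z) + sq z * (deriv Φ (η z) * deriv η z)) z := fun z =>
    ((hsqd z).hasDerivAt).mul (((hΦ (η z)).1.hasDerivAt).comp z (hηd z).hasDerivAt)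
  have hg1 : deriv (fun z => sq z * Φ (η z)) = fun z =>
      deriv sq z * Φ (η z) + sq z * (deriv Φ (η z) * deriv η z) :=
    funext fun z => (hd1 z).deriv
  have hd2 : ∀ z : ℝ, HasDerivAt
      (fun z => deriv sq z * Φ (η z) + sq z * (deriv Φ (η z) * deriv η z))
      (deriv (deriv sq) z * Φ (η z) + deriv sq z * (deriv Φ (η z) * deriv η z)
        + (deriv sq z * (deriv Φ (η z) * deriv η z)
          + sq z * (deriv (deriv Φ) (η z) * deriv η z * deriv η z
              + deriv Φ (η z) * deriv (deriv η) z))) z := by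
    intro z
    have hB : HasDerivAt (fun z => deriv Φ (η z)) (deriv (deriv Φ) (η z) * deriv η z) z :=
      ((hΦ (η z)).2.hasDerivAt).comp z (hηd z).hasDerivAt
    exact (((hsqd' z).hasDerivAt).mul
        (((hΦ (η z)).1.hasDerivAt).comp z (hηd z).hasDerivAt)).add
      (((hsqd z).hasDerivAt).mul (hB.mul (hηd' z).hasDerivAt))
  -- differentiate the identity sq² · η' = 1
  have hone : (fun z : ℝ => sq z * sq z * deriv η z) = fun _ => (1:ℂ) :=
    funext fun z => by
      rw [show sq z * sq z = sq z ^ 2 by ring, hsq2 z]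
      exact inv_mul_cancel₀ (hη'ne z)
  have hkey : ∀ z : ℝ, 2 * sq z * deriv sq z * deriv η z + sq z ^ 2 * deriv (deriv η) z = 0 := by
    intro z
    have hC : HasDerivAt (fun z : ℝ => sq z * sq z * deriv η z)
        ((deriv sq z * sq z + sq z * deriv sq z) * deriv η z
          + sq z * sq z * deriv (deriv η) z) z :=
      (((hsqd z).hasDerivAt).mul ((hsqd z).hasDerivAt)).mul ((hηd' z).hasDerivAt)
    rw [hone] at hC
    have h0 := hC.unique (hasDerivAt_const z 1)
    linear_combination h0
  intro z
  have hUc : (U z - c) * (sq z ^ 2) ^ 2 = Uc' * η z := by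
    have := hLanger z; rw [← hsq2 z] at this; exact this
  have hu : U z - c = Uc' * η z / sq z ^ 4 := by
    field_simp [hsq0 z]
    linear_combination hUc
  have he'' : deriv (deriv η) z = -(2 * deriv sq z) / sq z ^ 3 := by
    have h0 := hkey z
    rw [hη' z] at h0
    field_simp [hsq0 z] at h0
    rw [eq_div_iff (pow_ne_zero 3 (hsq0 z))]
    have hinv : sq z * (sq z)⁻¹ = 1 := mul_inv_cancel₀ (hsq0 z)
    linear_combination h0
  have h4 : iteratedDeriv 4 φ z = deriv (deriv (deriv (deriv φ))) z := by
    simp [iteratedDeriv_succ, iteratedDeriv_zero]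
  rw [h4]
  simp only [hψ, hg1, (hd2 z).deriv]
  rw [← hAiry (η z), hη' z, he'', hu]
  field_simp [hsq0 z]
  have hD : sq z ^ 2 * (sq z ^ 2 * (sq z ^ 2 * sq z ^ 2 * sq z ^ 3)) ≠ 0 := by
    simp [pow_eq_zero_iff, hsq0 z]
  ring
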